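/- For any impartial games G and H and nimbers *m ≠ *n: it is impossible that both (G + *m) ∘ H and (G + *n) ∘ H are P-positions. -/
import Mathlib


/-- Finite impartial games, given by their (finite list of) options. -/
inductive IGame : Type where
  | mk : List IGame → IGame

/-- The empty game `E`, with no options. -/
abbrev E : IGame := .mk []

/-- The list of options of a game. -/
def IGame.opts : IGame → List IGame
  | .mk l => l

theorem IGame.sizeOf_lt_of_mem {g : IGame} {l : List IGame} (h : g ∈ l) :
    sizeOf g < sizeOf (IGame.mk l) := by
  have := List.sizeOf_lt_of_mem h
  simp only [IGame.mk.sizeOf_spec]; omega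

/-- The pass operator: `E* = E`; for `G` with options, `G*` has options
`G` together with `g*` for each option `g` of `G`. -/
def pass : IGame → IGame
  | .mk [] => .mk []
  | .mk l => .mk (.mk l :: l.attach.map fun g => pass g.1)
decreasing_by
  exact IGame.sizeOf_lt_of_mem g.2

/-- The split sum `G ∘ H`. -/
def split : IGame → IGame → IGame
  | .mk [], _ => .mk []
  | .mk gs, .mk [] => .mk gs
  | .mk gs, .mk hs =>
      .mk ((hs.attach.map fun h => split (.mk gs) h.1) ++
           (gs.attach.map fun g => split g.1 (.mk hs)))
termination_by G H => sizeOf G + sizeOf H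
decreasing_by
  · have := IGame.sizeOf_lt_of_mem h.2; omega
  · have := IGame.sizeOf_lt_of_mem g.2; omega

/-- Disjunctive sum of games. -/
def addG : IGame → IGame → IGame
  | .mk gs, .mk hs =>
      .mk ((gs.attach.map fun g => addG g.1 (.mk hs)) ++
           (hs.attach.map fun h => addG (.mk gs) h.1))
termination_by G H => sizeOf G + sizeOf H
decreasing_by
  · have := IGame.sizeOf_lt_of_mem g.2; omega
  · have := IGame.sizeOf_lt_of_mem h.2; omega

/-- The nimber `*n`, with options `*0, …, *(n-1)`. -/
def star : ℕ → IGame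
  | n => .mk ((List.range n).attach.map fun k => star k.1)
termination_by n => n
decreasing_by have := List.mem_range.mp k.2; omega

/-- `G` is a P-position (previous player wins under normal play):
every option is an N-position. -/
def PPos : IGame → Prop
  | .mk l => ∀ g ∈ l.attach, ¬ PPos g.1
decreasing_by exact IGame.sizeOf_lt_of_mem g.2

/-- Identity of game trees (extensionally: same set of options, recursively). -/
def Ident : IGame → IGame → Prop
  | .mk gs, .mk hs =>
      (∀ g ∈ gs.attach, ∃ h ∈ hs.attach, Ident g.1 h.1) ∧
      (∀ h ∈ hs.attach, ∃ g ∈ gs.attach, Ident g.1 h.1)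
termination_by G H => sizeOf G + sizeOf H
decreasing_by
  · have := IGame.sizeOf_lt_of_mem g.2
    have := IGame.sizeOf_lt_of_mem h.2; omega
  · have := IGame.sizeOf_lt_of_mem g.2
    have := IGame.sizeOf_lt_of_mem h.2; omega


lemma PPos_mk {l : List IGame} : PPos (.mk l) ↔ ∀ g ∈ l, ¬ PPos g := by
  rw [PPos]; simp

lemma split_nil_left (H : IGame) : split (.mk []) H = .mk [] := by
  rw [split]

lemma split_nil_right (g : IGame) (gs : List IGame) :
    split (.mk (g :: gs)) (.mk []) = .mk (g :: gs) := by
  rw [split]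
  · simp

lemma opts_split (g : IGame) (gs : List IGame) (h : IGame) (hs : List IGame) :
    (split (.mk (g :: gs)) (.mk (h :: hs))).opts =
      ((h :: hs).map fun x => split (.mk (g :: gs)) x) ++
      ((g :: gs).map fun x => split x (.mk (h :: hs))) := by
  rw [split]
  · simp [IGame.opts]
  · simp
  · simp

lemma opts_addG (gs hs : List IGame) :
    (addG (.mk gs) (.mk hs)).opts =
      (gs.map fun x => addG x (.mk hs)) ++ (hs.map fun x => addG (.mk gs) x) := by
  rw [addG]; simp [IGame.opts]

lemma opts_star (n : ℕ) : (_root_.star n).opts = (List.range n).map _root_.star := by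
  rw [_root_.star]; simp [IGame.opts]

lemma not_PPos_of_mem {l : List IGame} {g : IGame} (hg : g ∈ l) (hp : PPos g) :
    ¬ PPos (.mk l) := fun h => (PPos_mk.mp h g hg) hp

lemma PPos_nil : PPos (.mk []) := PPos_mk.mpr (by simp)

lemma key (X Y H : IGame) (hXY : X ∈ Y.opts) :
    ¬ (PPos (split X H) ∧ PPos (split Y H)) := by
  obtain ⟨ys⟩ := Y
  obtain ⟨xs⟩ := X
  obtain ⟨hl⟩ := H
  simp only [IGame.opts] at hXY
  match ys, List.ne_nil_of_mem hXY with
  | y :: ys, _ =>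
    rintro ⟨h1, h2⟩
    match xs, hl with
    | [], [] =>
      rw [split_nil_right] at h2
      exact not_PPos_of_mem hXY PPos_nil h2
    | [], h :: hs =>
      refine not_PPos_of_mem (l := (split (.mk (y::ys)) (.mk (h::hs))).opts) ?_ PPos_nil ?_
      · rw [opts_split]
        refine List.mem_append_right _ ?_
        exact List.mem_map.mpr ⟨_, hXY, split_nil_left _⟩
      · cases hh : split (.mk (y::ys)) (.mk (h::hs))
        rw [hh] at h2
        simpa [hh, IGame.opts] using h2
    | x :: xs, [] =>
      rw [split_nil_right] at h1 h2
      exact not_PPos_of_mem hXY h1 h2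
    | x :: xs, h :: hs =>
      have hmem : split (.mk (x::xs)) (.mk (h::hs)) ∈
          (split (.mk (y::ys)) (.mk (h::hs))).opts := by
        rw [opts_split]
        exact List.mem_append_right _ (List.mem_map.mpr ⟨_, hXY, rfl⟩)
      have := not_PPos_of_mem (l := (split (.mk (y::ys)) (.mk (h::hs))).opts) hmem h1
      cases hh : split (.mk (y::ys)) (.mk (h::hs))
      rw [hh] at h2 this
      simp only [IGame.opts] at this
      exact this h2


/-- for nimbers `*m ≠ *n`, it is impossible that both
`(G + *m) ∘ H` and `(G + *n) ∘ H` are P-positions. -/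
theorem not_both_PPos (G H : IGame) (m n : ℕ) (hmn : m ≠ n) :
    ¬ (PPos (split (addG G (star m)) H) ∧ PPos (split (addG G (star n)) H)) := by
  have main : ∀ m n : ℕ, m < n →
      ¬ (PPos (split (addG G (star m)) H) ∧ PPos (split (addG G (star n)) H)) := by
    intro m n hlt
    apply key
    obtain ⟨gs⟩ := G
    have hs : ∀ k : ℕ, _root_.star k = IGame.mk ((List.range k).map _root_.star) := by
      intro k; rw [_root_.star]; simp
    rw [hs n, opts_addG]
    refine List.mem_append_right _ (List.mem_map.mpr ?_)
    exact ⟨_, List.mem_map.mpr ⟨m, List.mem_range.mpr hlt, hs m⟩, by rw [hs m]⟩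
  rcases hmn.lt_or_gt with h | h
  · exact main m n h
  · exact fun ⟨a, b⟩ => main n m h ⟨b, a⟩
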